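/- Let V be a space of functions in H²(0,1) closed under differentiation in the sense that s ∈ V implies s' ∈ V, and suppose every s ∈ V satisfies s'(0)s(0) = s'(1)s(1). If every element t of V' := {s' : s ∈ V} satisfies the inverse inequality ‖t'‖ ≤ M‖t‖, then every s ∈ V satisfies ‖s'‖ ≤ M‖s‖, where ‖·‖ is the L²(0,1) norm. -/

import Mathlib

open MeasureTheory intervalIntegral

/-- Induction step for the inverse inequality: if `V` is closed under differentiation,
every `s ∈ V` satisfies the boundary condition `s'(0)s(0) = s'(1)s(1)`, and every
derivative `t ∈ V' = {s' : s ∈ V}` satisfies `‖t'‖ ≤ M‖t‖`, then every `s ∈ V` satisfies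
`‖s'‖ ≤ M‖s‖` in `L²(0,1)` (stated in squared form). -/
theorem stmt8 (V : Set (ℝ → ℝ)) (M : ℝ) (hM : 0 ≤ M)
    (hsmooth : ∀ s ∈ V, ContDiffOn ℝ 2 s (Set.Icc 0 1))
    (hclosed : ∀ s ∈ V, deriv s ∈ V)
    (hbc : ∀ s ∈ V, deriv s 0 * s 0 = deriv s 1 * s 1)
    (hinv : ∀ t ∈ deriv '' V,
      (∫ x in (0 : ℝ)..1, (deriv t x) ^ 2) ≤ M ^ 2 * ∫ x in (0 : ℝ)..1, (t x) ^ 2) :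
    ∀ s ∈ V, (∫ x in (0 : ℝ)..1, (deriv s x) ^ 2) ≤ M ^ 2 * ∫ x in (0 : ℝ)..1, (s x) ^ 2 := by
  intro s hs
  set g := deriv s with hg_def
  set h := deriv g with hh_def
  have hgV : g ∈ V := hclosed s hs
  have hhV : h ∈ V := hclosed g hgV
  have huIcc : Set.uIcc (0:ℝ) 1 = Set.Icc 0 1 := Set.uIcc_of_le (by norm_num)
  have hsc : ContinuousOn s (Set.Icc 0 1) := (hsmooth s hs).continuousOn
  have hgc : ContinuousOn g (Set.Icc 0 1) := (hsmooth g hgV).continuousOn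
  have hhc : ContinuousOn h (Set.Icc 0 1) := (hsmooth h hhV).continuousOn
  have hderiv : ∀ f ∈ V, ∀ x ∈ Set.Ioo (0:ℝ) 1, HasDerivAt f (deriv f x) x := by
    intro f hf x hx
    have hnhds : Set.Icc (0:ℝ) 1 ∈ nhds x := Icc_mem_nhds hx.1 hx.2
    have : ContDiffAt ℝ 2 f x := (hsmooth f hf).contDiffAt hnhds
    exact (this.differentiableAt (by norm_num)).hasDerivAt
  have hint : ∀ u v : ℝ → ℝ, ContinuousOn u (Set.Icc 0 1) → ContinuousOn v (Set.Icc 0 1) →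
      IntervalIntegrable (fun x => u x * v x) volume 0 1 := by
    intro u v hu hv
    exact ContinuousOn.intervalIntegrable (by rw [huIcc]; exact hu.mul hv)
  -- integration by parts / FTC for (g * s)' = h * s + g * g
  have hftc : (∫ x in (0:ℝ)..1, (h x * s x + g x * g x)) = g 1 * s 1 - g 0 * s 0 := by
    apply integral_eq_sub_of_hasDeriv_right_of_le (by norm_num) (hgc.mul hsc)
    · intro x hx
      exact ((hderiv g hgV x hx).mul (hderiv s hs x hx)).hasDerivWithinAt
    · exact ContinuousOn.intervalIntegrable (by rw [huIcc]; exact (hhc.mul hsc).add (hgc.mul hgc))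
  have hzero : g 1 * s 1 - g 0 * s 0 = 0 := by
    have := hbc s hs; rw [← hg_def] at this; linarith
  set A := ∫ x in (0:ℝ)..1, g x * g x with hA_def
  set B := ∫ x in (0:ℝ)..1, s x * s x with hB_def
  set C := ∫ x in (0:ℝ)..1, h x * h x with hC_def
  set I := ∫ x in (0:ℝ)..1, h x * s x with hI_def
  have hsplit : I + A = 0 := by
    rw [hI_def, hA_def, ← integral_add (hint h s hhc hsc) (hint g g hgc hgc), hftc, hzero]
  -- Cauchy–Schwarz via discriminant
  have hCS : I ^ 2 ≤ B * C := by
    have key : ∀ lam : ℝ, 0 ≤ B * (lam * lam) + (2 * I) * lam + C := by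
      intro lam
      have hexp : B * (lam * lam) + (2 * I) * lam + C
          = ∫ x in (0:ℝ)..1, (lam * s x + h x) * (lam * s x + h x) := by
        have h1 : IntervalIntegrable (fun x => lam * lam * (s x * s x)) volume 0 1 :=
          (hint s s hsc hsc).const_mul _
        have h2 : IntervalIntegrable (fun x => 2 * lam * (s x * h x)) volume 0 1 :=
          (hint s h hsc hhc).const_mul _
        have h3 := hint h h hhc hhc
        rw [show (fun x => (lam * s x + h x) * (lam * s x + h x))
            = fun x => (lam * lam * (s x * s x) + 2 * lam * (s x * h x)) + h x * h x by
          funext x; ring]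
        rw [integral_add (h1.add h2) h3, integral_add h1 h2, intervalIntegral.integral_const_mul,
          intervalIntegral.integral_const_mul]
        have hsh : (∫ x in (0:ℝ)..1, s x * h x) = I := by
          rw [hI_def]; congr 1; funext x; ring
        rw [hsh, ← hB_def, ← hC_def]
        ring
      rw [hexp]
      apply intervalIntegral.integral_nonneg (by norm_num)
      intro x _
      exact mul_self_nonneg _
    have hd := discrim_le_zero key
    rw [discrim] at hd
    nlinarith
  have hAnonneg : 0 ≤ A := by
    apply intervalIntegral.integral_nonneg (by norm_num)
    intro x _; exact mul_self_nonneg _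
  have hBnonneg : 0 ≤ B := by
    apply intervalIntegral.integral_nonneg (by norm_num)
    intro x _; exact mul_self_nonneg _
  -- inverse inequality for g
  have hCle : C ≤ M ^ 2 * A := by
    have := hinv g ⟨s, hs, rfl⟩
    have e1 : (∫ x in (0:ℝ)..1, (deriv g x) ^ 2) = C := by
      rw [hC_def, ← hh_def]; congr 1; funext x; ring
    have e2 : (∫ x in (0:ℝ)..1, (g x) ^ 2) = A := by
      rw [hA_def]; congr 1; funext x; ring
    rwa [e1, e2] at this
  -- conclude
  have egoal1 : (∫ x in (0:ℝ)..1, (deriv s x) ^ 2) = A := by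
    rw [hA_def, ← hg_def]; congr 1; funext x; ring
  have egoal2 : (∫ x in (0:ℝ)..1, (s x) ^ 2) = B := by
    rw [hB_def]; congr 1; funext x; ring
  rw [egoal1, egoal2]
  have hIA : I = -A := by linarith
  have hA2 : A ^ 2 ≤ B * (M ^ 2 * A) := by
    calc A ^ 2 = I ^ 2 := by rw [hIA]; ring
    _ ≤ B * C := hCS
    _ ≤ B * (M ^ 2 * A) := by
        exact mul_le_mul_of_nonneg_left hCle hBnonneg
  rcases eq_or_lt_of_le hAnonneg with hA0 | hApos
  · rw [← hA0]; positivity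
  · nlinarith
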